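/- arXiv:2110.13227 — 4 statements merged into one kernel-verified Lean document; each statement's English description precedes it below -/
import Mathlib

section
/- If D is a direct product D = P₁^{a₁} × P₂^{a₂} × ⋯ × P_k^{a_k}, where P_j denotes a Sylow p-subgroup of the symmetric group on p^j letters (an iterated wreath product of j copies of the cyclic group C_p), and a_k ≥ 1, then the derived length of D equals k. -/
open SemidirectProduct Subgroup
open scoped commutatorElement

/-! ### Generic derived series lemmas -/

section DerivedLemmas
variable {G H : Type*} [Group G] [Group H]

lemma ds_succ_le (n : ℕ) : derivedSeries G (n+1) ≤ derivedSeries G n := by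
  rw [derivedSeries_succ]
  refine Subgroup.commutator_le.mpr ?_
  intro g hg h hh
  rw [commutatorElement_def]
  exact mul_mem (mul_mem (mul_mem hg hh) (inv_mem hg)) (inv_mem hh)

lemma ds_antitone {m n : ℕ} (h : m ≤ n) : derivedSeries G n ≤ derivedSeries G m :=
  antitone_nat_of_succ_le ds_succ_le h

lemma ds_bot_of_le {m n : ℕ} (h : m ≤ n) (hm : derivedSeries G m = ⊥) :
    derivedSeries G n = ⊥ :=
  le_bot_iff.mp (hm ▸ ds_antitone h)

lemma ds_bot_congr (e : G ≃* H) {n : ℕ} (h : derivedSeries G n = ⊥) :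
    derivedSeries H n = ⊥ := by
  rw [← map_derivedSeries_eq (f := e.toMonoidHom) e.surjective n, h, Subgroup.map_bot]

lemma ds_pi_bot {ι : Type*} {Gi : ι → Type*} [∀ i, Group (Gi i)] {n : ℕ}
    (h : ∀ i, derivedSeries (Gi i) n = ⊥) : derivedSeries (∀ i, Gi i) n = ⊥ := by
  rw [Subgroup.eq_bot_iff_forall]
  intro x hx
  funext i
  have hxi : x i ∈ derivedSeries (Gi i) n :=
    map_derivedSeries_le_derivedSeries (Pi.evalMonoidHom Gi i) n
      (Subgroup.mem_map_of_mem _ hx)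
  rw [h i] at hxi
  exact hxi

lemma ds_le_map_subtype {K : Subgroup G} (hK : derivedSeries G 1 ≤ K) :
    ∀ n, derivedSeries G (n+1) ≤ (derivedSeries K n).map K.subtype
  | 0 => by
    rw [derivedSeries_zero, ← MonoidHom.range_eq_map, Subgroup.range_subtype]
    exact hK
  | n+1 =>
    calc derivedSeries G (n+2) = ⁅derivedSeries G (n+1), derivedSeries G (n+1)⁆ :=
          derivedSeries_succ G (n+1)
    _ ≤ ⁅(derivedSeries K n).map K.subtype, (derivedSeries K n).map K.subtype⁆ :=
          Subgroup.commutator_mono (ds_le_map_subtype hK n) (ds_le_map_subtype hK n)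
    _ = (derivedSeries K (n+1)).map K.subtype := (Subgroup.map_commutator _ _ _).symm

lemma map_subtype_ds_le {K : Subgroup G} (hK : K ≤ derivedSeries G 1) :
    ∀ n, (derivedSeries K n).map K.subtype ≤ derivedSeries G (n+1)
  | 0 => by
    rw [derivedSeries_zero, ← MonoidHom.range_eq_map, Subgroup.range_subtype]
    exact hK
  | n+1 =>
    calc (derivedSeries K (n+1)).map K.subtype
        = ⁅(derivedSeries K n).map K.subtype, (derivedSeries K n).map K.subtype⁆ := by
          rw [derivedSeries_succ, Subgroup.map_commutator]
    _ ≤ ⁅derivedSeries G (n+1), derivedSeries G (n+1)⁆ :=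
          Subgroup.commutator_mono (map_subtype_ds_le hK n) (map_subtype_ds_le hK n)
    _ = derivedSeries G (n+2) := (derivedSeries_succ G (n+1)).symm

end DerivedLemmas
/-! ### Wreath product with `C_p` -/

section Wreath

variable (p : ℕ)

/-- The shift action of `C_p` on `ZMod p → G`. -/
def shiftHom (G : Type) [Group G] : Multiplicative (ZMod p) →* MulAut (ZMod p → G) where
  toFun g :=
    { toFun := fun f i => f (i - g.toAdd)
      invFun := fun f i => f (i + g.toAdd)
      left_inv := fun f => funext fun i => by simp
      right_inv := fun f => funext fun i => by simp
      map_mul' := fun f h => rfl }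
  map_one' := by
    ext f i
    simp
  map_mul' g h := by
    ext f i
    show f (i - (g.toAdd + h.toAdd)) = f (i - g.toAdd - h.toAdd)
    rw [sub_sub]

lemma shiftHom_apply {G : Type} [Group G] (g : Multiplicative (ZMod p)) (f : ZMod p → G)
    (i : ZMod p) : shiftHom p G g f i = f (i - g.toAdd) := rfl

/-- One step of the wreath product construction. -/
abbrev wr (G : Type) [Group G] : Type :=
  SemidirectProduct (ZMod p → G) (Multiplicative (ZMod p)) (shiftHom p G)

/-- A semidirect product is equivalent (as a type) to the product. -/
def sdEquiv {N H : Type*} [Group N] [Group H] (φ : H →* MulAut N) :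
    (N ⋊[φ] H) ≃ N × H where
  toFun x := (x.left, x.right)
  invFun y := ⟨y.1, y.2⟩
  left_inv x := rfl
  right_inv y := rfl

instance {N H : Type*} [Group N] [Group H] (φ : H →* MulAut N) [Finite N] [Finite H] :
    Finite (N ⋊[φ] H) :=
  Finite.of_equiv _ (sdEquiv φ).symm

lemma card_wr (G : Type) [Group G] [NeZero p] [Finite G] :
    Nat.card (wr p G) = Nat.card G ^ p * p := by
  rw [Nat.card_congr (sdEquiv _), Nat.card_prod, Nat.card_fun, Nat.card_zmod,
    Nat.card_congr Multiplicative.toAdd, Nat.card_zmod]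

end Wreath
/-! ### Embedding the wreath product into permutations -/

section Perm

variable (p : ℕ) {G : Type} [Group G] {α : Type}

/-- `permCongr` as a `MulEquiv`. -/
def permCongrMul {α β : Type*} (e : α ≃ β) : Equiv.Perm α ≃* Equiv.Perm β :=
  { e.permCongr with
    map_mul' := fun x y => Equiv.ext fun b => by simp [Equiv.permCongr_def] }

/-- The base part of the wreath permutation action. -/
def basePerm (f : G →* Equiv.Perm α) (n : ZMod p → G) : Equiv.Perm (α × ZMod p) where
  toFun z := (f (n z.2) z.1, z.2)
  invFun z := ((f (n z.2))⁻¹ z.1, z.2)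
  left_inv z := by simp
  right_inv z := by simp

/-- The top (shift) part of the wreath permutation action. -/
def shiftPerm (g : ZMod p) : Equiv.Perm (α × ZMod p) where
  toFun z := (z.1, z.2 + g)
  invFun z := (z.1, z.2 - g)
  left_inv z := by simp
  right_inv z := by simp

def baseHom (f : G →* Equiv.Perm α) : (ZMod p → G) →* Equiv.Perm (α × ZMod p) where
  toFun := basePerm p f
  map_one' := Equiv.ext fun z => by simp [basePerm]
  map_mul' n m := Equiv.ext fun z => by simp [basePerm]

def topHom (α : Type) : Multiplicative (ZMod p) →* Equiv.Perm (α × ZMod p) where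
  toFun g := shiftPerm p (α := α) g.toAdd
  map_one' := Equiv.ext fun z => by simp [shiftPerm]
  map_mul' g h := Equiv.ext fun z => by
    show (z.1, z.2 + (g * h).toAdd) = (z.1, z.2 + h.toAdd + g.toAdd)
    rw [toAdd_mul, add_assoc, add_comm g.toAdd h.toAdd]

/-- The wreath product acting on `α × ZMod p`. -/
def wrPerm (f : G →* Equiv.Perm α) : wr p G →* Equiv.Perm (α × ZMod p) :=
  SemidirectProduct.lift (baseHom p f) (topHom p α) (by
    intro g
    ext n : 1
    refine Equiv.ext fun z => ?_
    show basePerm p f (shiftHom p G g n) z = (topHom p α g * basePerm p f n * (topHom p α g)⁻¹) z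
    have h1 : ((topHom p α g)⁻¹ : Equiv.Perm (α × ZMod p)) z = (z.1, z.2 - g.toAdd) := rfl
    show (f ((shiftHom p G g n) z.2) z.1, z.2) = _
    rw [Equiv.Perm.mul_apply, Equiv.Perm.mul_apply, h1]
    show _ = (f (n (z.2 - g.toAdd)) z.1, z.2 - g.toAdd + g.toAdd)
    rw [shiftHom_apply, sub_add_cancel])

lemma wrPerm_apply (f : G →* Equiv.Perm α) (x : wr p G) (z : α × ZMod p) :
    wrPerm p f x z = (f (x.left (z.2 + x.right.toAdd)) z.1, z.2 + x.right.toAdd) := by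
  show (baseHom p f x.left * topHom p α x.right) z = _
  rfl

lemma wrPerm_injective (f : G →* Equiv.Perm α) [Nonempty α] (hf : Function.Injective f) :
    Function.Injective (wrPerm p f) := by
  rw [injective_iff_map_eq_one]
  intro x hx
  have hz : ∀ z : α × ZMod p, (f (x.left (z.2 + x.right.toAdd)) z.1, z.2 + x.right.toAdd) = z := by
    intro z
    rw [← wrPerm_apply, hx]
    rfl
  obtain ⟨x₀⟩ := ‹Nonempty α›
  have hr : x.right = 1 := by
    have := congrArg Prod.snd (hz (x₀, 0))
    simp only at this
    have h0 : x.right.toAdd = 0 := by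
      have : (0 : ZMod p) + x.right.toAdd = 0 := this
      simpa using this
    exact Multiplicative.toAdd.injective h0
  have hl : x.left = 1 := by
    funext i
    apply hf
    apply Equiv.ext
    intro y
    have := congrArg Prod.fst (hz (y, i - x.right.toAdd))
    simp only [sub_add_cancel] at this
    simpa using this
  exact SemidirectProduct.ext hl hr

end Perm
/-! ### The iterated wreath product tower -/

section Tower

/-- Auxiliary: the iterated wreath product, bundled with its group structure. -/
def WW (p : ℕ) : ℕ → Σ G : Type, Group G
  | 0 => ⟨PUnit.{1}, inferInstance⟩
  | j+1 => letI := (WW p j).2; ⟨wr p (WW p j).1, inferInstanceAs (Group (wr p (WW p j).1))⟩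

/-- The iterated wreath product of `j` copies of `C_p`. -/
def Wg (p j : ℕ) : Type := (WW p j).1

instance WgGroup (p j : ℕ) : Group (Wg p j) := (WW p j).2
instance WgGroup' (p j : ℕ) : Group ((WW p j).1) := (WW p j).2

example (p j : ℕ) : Wg p (j+1) = wr p (Wg p j) := rfl

def finiteWg (p : ℕ) [NeZero p] : ∀ j, Finite (Wg p j)
  | 0 => inferInstanceAs (Finite PUnit.{1})
  | j+1 => letI := finiteWg p j; inferInstanceAs (Finite (wr p (Wg p j)))

attribute [local instance] finiteWg

lemma card_Wg (p : ℕ) [NeZero p] : ∀ j, Nat.card (Wg p j) = p ^ (∑ i ∈ Finset.range j, p ^ i)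
  | 0 => by
    have : Nat.card (Wg p 0) = Nat.card PUnit.{1} := rfl
    simp [this]
  | j+1 => by
    have h1 : Nat.card (Wg p (j+1)) = Nat.card (Wg p j) ^ p * p := card_wr p (Wg p j)
    rw [h1, card_Wg p j, ← pow_mul, ← pow_succ]
    congr 1
    rw [Finset.sum_range_succ']
    simp only [pow_zero, pow_succ, ← Finset.sum_mul]

/-- The injective homomorphism of the tower into permutation groups. -/
noncomputable def rho (p : ℕ) [NeZero p] :
    ∀ j, {f : Wg p j →* Equiv.Perm (Fin (p ^ j)) // Function.Injective f}
  | 0 =>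
    ⟨1, by
      letI : Subsingleton (Wg p 0) := inferInstanceAs (Subsingleton PUnit.{1})
      exact fun a b _ => Subsingleton.elim a b⟩
  | j+1 => by
    obtain ⟨f, hf⟩ := rho p j
    haveI : NeZero (p ^ j) := ⟨pow_ne_zero j (NeZero.ne p)⟩
    let κ : (Fin (p^j) × ZMod p) ≃ Fin (p^(j+1)) :=
      Fintype.equivFinOfCardEq (by simp [ZMod.card, pow_succ])
    exact ⟨(permCongrMul κ).toMonoidHom.comp (wrPerm p f),
      ((permCongrMul κ).injective).comp (wrPerm_injective p f hf)⟩

end Tower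
/-! ### Derived series of the tower -/

section DS

lemma commutator_wr_le_ker (p : ℕ) (G : Type) [Group G] :
    derivedSeries (wr p G) 1 ≤
      (rightHom : wr p G →* Multiplicative (ZMod p)).ker := by
  rw [derivedSeries_succ, derivedSeries_zero]
  refine Subgroup.commutator_le.mpr ?_
  intro a _ b _
  rw [MonoidHom.mem_ker, map_commutatorElement]
  rw [commutatorElement_def, mul_comm (rightHom a), mul_assoc]
  simp [mul_assoc]

/-- The projection to the base group, defined on the kernel of `rightHom`. -/
def kerLeft {N H : Type*} [Group N] [Group H] (φ : H →* MulAut N) :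
    ↥((rightHom : N ⋊[φ] H →* H).ker) →* N where
  toFun x := (x : N ⋊[φ] H).left
  map_one' := rfl
  map_mul' x y := by
    have hx : (x : N ⋊[φ] H).right = 1 := x.2
    show ((x : N ⋊[φ] H) * y).left = _
    rw [SemidirectProduct.mul_left, hx]
    simp

lemma ds_Wg_upper (p : ℕ) : ∀ j, derivedSeries (Wg p j) j = ⊥
  | 0 => by
    letI : Subsingleton (Wg p 0) := inferInstanceAs (Subsingleton PUnit.{1})
    exact Subgroup.eq_bot_iff_forall _ |>.mpr fun x _ => Subsingleton.elim x 1
  | j+1 => by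
    show derivedSeries (wr p (Wg p j)) (j+1) = ⊥
    have hcomm := commutator_wr_le_ker p (Wg p j)
    have hker : derivedSeries (↥((rightHom : wr p (Wg p j) →* _).ker)) j = ⊥ := by
      have e1 : (ZMod p → Wg p j) ≃*
          ↥((rightHom : wr p (Wg p j) →* Multiplicative (ZMod p)).ker) :=
        (MonoidHom.ofInjective SemidirectProduct.inl_injective).trans
          (MulEquiv.subgroupCongr range_inl_eq_ker_rightHom)
      exact ds_bot_congr e1 (ds_pi_bot fun _ => ds_Wg_upper p j)
    have h2 := ds_le_map_subtype hcomm j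
    rw [hker, Subgroup.map_bot] at h2
    exact le_bot_iff.mp h2

lemma ds_Wg_lower (p : ℕ) (hp : 1 < p) : ∀ j, derivedSeries (Wg p (j+1)) j ≠ ⊥
  | 0 => by
    haveI : Fact (1 < p) := ⟨hp⟩
    rw [derivedSeries_zero]
    intro h
    have h1 : (inr (Multiplicative.ofAdd (1 : ZMod p)) : wr p (Wg p 0)) = 1 :=
      Subgroup.eq_bot_iff_forall _ |>.mp h _ (Subgroup.mem_top _)
    have h2 := inr_injective h1
    rw [ofAdd_eq_one] at h2
    exact one_ne_zero h2
  | j+1 => by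
    haveI : Fact (1 < p) := ⟨hp⟩
    intro hbot
    replace hbot : derivedSeries (wr p (Wg p (j+1))) (j+1) = ⊥ := hbot
    have hD1K : derivedSeries (wr p (Wg p (j+1))) 1 ≤
        (rightHom : wr p (Wg p (j+1)) →* Multiplicative (ZMod p)).ker :=
      commutator_wr_le_ker p (Wg p (j+1))
    let q : ↥(derivedSeries (wr p (Wg p (j+1))) 1) →* Wg p (j+1) :=
      (Pi.evalMonoidHom _ (0 : ZMod p)).comp
        ((kerLeft (shiftHom p (Wg p (j+1)))).comp (Subgroup.inclusion hD1K))
    have hqsurj : Function.Surjective q := by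
      intro w
      have hne : (-1 : ZMod p) ≠ 0 := neg_ne_zero.mpr one_ne_zero
      have hc : ⁅(inl (Pi.mulSingle (0:ZMod p) w) : wr p (Wg p (j+1))),
          (inr (Multiplicative.ofAdd (1 : ZMod p)) : wr p (Wg p (j+1)))⁆ ∈
          derivedSeries (wr p (Wg p (j+1))) 1 := by
        rw [derivedSeries_succ, derivedSeries_zero]
        exact Subgroup.commutator_mem_commutator (Subgroup.mem_top _) (Subgroup.mem_top _)
      refine ⟨⟨_, hc⟩, ?_⟩
      have key : ⁅(inl (Pi.mulSingle (0:ZMod p) w) : wr p (Wg p (j+1))),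
          (inr (Multiplicative.ofAdd (1 : ZMod p)) : wr p (Wg p (j+1)))⁆
          = inl ((Pi.mulSingle (0:ZMod p) w) *
              shiftHom p (Wg p (j+1)) (Multiplicative.ofAdd (1 : ZMod p))
                (Pi.mulSingle (0:ZMod p) w)⁻¹) := by
        rw [commutatorElement_def, map_mul, SemidirectProduct.inl_aut, map_inv, map_inv]
        simp [mul_assoc]
      show SemidirectProduct.left ⁅(inl (Pi.mulSingle (0:ZMod p) w) : wr p (Wg p (j+1))),
          (inr (Multiplicative.ofAdd (1 : ZMod p)) : wr p (Wg p (j+1)))⁆ 0 = w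
      rw [key, SemidirectProduct.left_inl, Pi.mul_apply, shiftHom_apply]
      simp only [Pi.mulSingle_eq_same, Pi.inv_apply]
      rw [zero_sub]
      rw [toAdd_ofAdd, Pi.mulSingle_eq_of_ne hne]
      simp
    have h1 := map_subtype_ds_le (le_refl (derivedSeries (wr p (Wg p (j+1))) 1)) j
    rw [hbot] at h1
    have h2 : derivedSeries ↥(derivedSeries (wr p (Wg p (j+1))) 1) j = ⊥ :=
      (Subgroup.map_eq_bot_iff_of_injective _ (Subgroup.subtype_injective _)).mp
        (le_bot_iff.mp h1)
    have h3 := derivedSeries_le_map_derivedSeries hqsurj j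
    rw [h2, Subgroup.map_bot] at h3
    exact ds_Wg_lower p hp j (le_bot_iff.mp h3)

end DS
/-! ### Sylow subgroups of symmetric groups -/

section SylowPart

lemma factorization_factorial_prime_pow {p : ℕ} (hp : p.Prime) (j : ℕ) :
    (Nat.factorial (p ^ j)).factorization p = ∑ i ∈ Finset.range j, p ^ i := by
  haveI : Fact p.Prime := ⟨hp⟩
  rw [Nat.factorization_def _ hp,
    padicValNat_factorial (b := j + 1) (by rw [Nat.log_pow hp.one_lt]; omega)]
  rw [Finset.sum_Ico_eq_sum_range]
  simp only [Nat.add_sub_cancel]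
  rw [← Finset.sum_range_reflect]
  refine Finset.sum_congr rfl ?_
  intro i hi
  rw [Finset.mem_range] at hi
  rw [Nat.pow_div (by omega) hp.pos]
  congr 1
  omega

lemma sylow_iso_Wg {p : ℕ} (hp : p.Prime) (j : ℕ)
    (P : Sylow p (Equiv.Perm (Fin (p ^ j)))) :
    Nonempty (↥(P : Subgroup (Equiv.Perm (Fin (p ^ j)))) ≃* Wg p j) := by
  haveI : Fact p.Prime := ⟨hp⟩
  haveI : NeZero p := ⟨hp.ne_zero⟩
  obtain ⟨f, hf⟩ := rho p j
  have hcard : Nat.card f.range =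
      p ^ ((Nat.card (Equiv.Perm (Fin (p ^ j)))).factorization p) := by
    have h1 : Nat.card f.range = Nat.card (Wg p j) :=
      Nat.card_congr (MonoidHom.ofInjective hf).toEquiv.symm
    rw [h1, card_Wg,
      Nat.card_eq_fintype_card, Fintype.card_perm, Fintype.card_fin,
      factorization_factorial_prime_pow hp]
  let Q : Sylow p (Equiv.Perm (Fin (p ^ j))) := Sylow.ofCard f.range hcard
  exact ⟨(Sylow.equiv P Q).trans
    ((MulEquiv.subgroupCongr (show (Q : Subgroup (Equiv.Perm (Fin (p ^ j)))) = f.range from rfl)).trans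
      (MonoidHom.ofInjective hf).symm)⟩

end SylowPart
/-- The derived length of a group: the least `n` with `derivedSeries G n = ⊥`. -/
noncomputable def derivedLength (G : Type*) [Group G] : ℕ :=
  sInf {n : ℕ | derivedSeries G n = ⊥}

/-- If `D ≅ P₁^{a₁} × P₂^{a₂} × ⋯ × P_k^{a_k}`, where `P_j` is a Sylow `p`-subgroup of the
symmetric group on `p^j` letters, and `a_k ≥ 1`, then the derived length of `D` equals `k`. -/
theorem derivedLength_of_prod_sylow_symmetric (p : ℕ) (hp : p.Prime) (k : ℕ) (hk : 1 ≤ k)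
    (a : ℕ → ℕ) (hak : a k ≠ 0)
    (P : ∀ j : ℕ, Sylow p (Equiv.Perm (Fin (p ^ j))))
    (D : Type*) [Group D]
    (hD : Nonempty (D ≃*
      ∀ j : Fin k, (Fin (a (j.1 + 1)) →
        (P (j.1 + 1) : Subgroup (Equiv.Perm (Fin (p ^ (j.1 + 1)))))))) :
    derivedLength D = k := by
  obtain ⟨e⟩ := hD
  obtain ⟨m, rfl⟩ : ∃ m, k = m + 1 := ⟨k - 1, by omega⟩
  -- upper bound : the derived series vanishes at step `m+1`
  have hup : derivedSeries D (m+1) = ⊥ := by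
    refine ds_bot_congr e.symm ?_
    refine ds_pi_bot fun j => ?_
    refine ds_pi_bot fun _ => ?_
    obtain ⟨ej⟩ := sylow_iso_Wg hp (j.1 + 1) (P (j.1 + 1))
    refine ds_bot_congr ej.symm ?_
    exact ds_bot_of_le (by omega : j.1 + 1 ≤ m + 1) (ds_Wg_upper p (j.1 + 1))
  -- lower bound : the derived series does not vanish at step `m`
  have hlow : derivedSeries D m ≠ ⊥ := by
    intro hbot
    obtain ⟨ek⟩ := sylow_iso_Wg hp (m + 1) (P (m + 1))
    let j0 : Fin (m+1) := ⟨m, Nat.lt_succ_self m⟩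
    let i0 : Fin (a (m+1)) := ⟨0, Nat.pos_of_ne_zero hak⟩
    let ψ : ↥(P (m + 1) : Subgroup (Equiv.Perm (Fin (p ^ (m + 1))))) →*
        (∀ j : Fin (m+1), Fin (a (j.1 + 1)) →
          ↥(P (j.1 + 1) : Subgroup (Equiv.Perm (Fin (p ^ (j.1 + 1)))))) :=
      (MonoidHom.mulSingle _ j0).comp
        (MonoidHom.mulSingle
          (fun _ : Fin (a (m+1)) =>
            ↥(P (m + 1) : Subgroup (Equiv.Perm (Fin (p ^ (m + 1)))))) i0)
    have hψ : Function.Injective ψ := by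
      intro x y hxy
      have h1 := congrFun (congrFun hxy j0) i0
      simpa [ψ, MonoidHom.mulSingle_apply] using h1
    have h1 := ds_bot_congr e hbot
    have h2 := map_derivedSeries_le_derivedSeries ψ m
    rw [h1] at h2
    have h3 := (Subgroup.map_eq_bot_iff_of_injective _ hψ).mp (le_bot_iff.mp h2)
    exact ds_Wg_lower p hp.one_lt m (ds_bot_congr ek h3)
  -- conclude
  show sInf {n : ℕ | derivedSeries D n = ⊥} = m + 1
  have hmem : (m+1) ∈ {n : ℕ | derivedSeries D n = ⊥} := hup
  refine le_antisymm (Nat.sInf_le hmem) ?_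
  by_contra h
  push_neg at h
  have hin : derivedSeries D (sInf {n : ℕ | derivedSeries D n = ⊥}) = ⊥ :=
    Nat.sInf_mem ⟨_, hmem⟩
  exact hlow (ds_bot_of_le (by omega) hin)
end

section
/- Let D be a p-group of order p^k. Then the derived length of D is at most (k+1)/2. -/
open Subgroup

/-- In a finite nilpotent group, the commutator subgroup is contained in the Frattini
subgroup. -/
lemma commutator_le_frattini_aux (G : Type*) [Group G] [Finite G] [Group.IsNilpotent G] :
    commutator G ≤ frattini G := by
  refine le_iInf fun K => le_iInf fun hK => ?_
  have hq := (isNilpotent_of_finite_tfae (G := G)).out 0 2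
  have hnormal : K.Normal := hq.mp ‹_› K hK
  -- the quotient G ⧸ K is cyclic
  have hcyc : IsCyclic (G ⧸ K) := by
    rcases subsingleton_or_nontrivial (G ⧸ K) with h | h
    · infer_instance
    · obtain ⟨x, hx⟩ := exists_ne (1 : G ⧸ K)
      refine ⟨x, fun y => ?_⟩
      have h1 : K < (Subgroup.zpowers x).comap (QuotientGroup.mk' K) := by
        refine lt_of_le_of_ne (fun g hg => ?_) (fun h => ?_)
        · simp only [Subgroup.mem_comap]
          have : QuotientGroup.mk' K g = 1 := (QuotientGroup.eq_one_iff g).mpr hg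
          rw [this]; exact one_mem _
        · obtain ⟨g, rfl⟩ := QuotientGroup.mk'_surjective K x
          have : (g : G) ∈ (Subgroup.zpowers (QuotientGroup.mk' K g)).comap
              (QuotientGroup.mk' K) := by
            simp only [Subgroup.mem_comap]; exact Subgroup.mem_zpowers _
          rw [← h] at this
          exact hx ((QuotientGroup.eq_one_iff g).mpr this)
      have h2 : (Subgroup.zpowers x).comap (QuotientGroup.mk' K) = ⊤ := hK.2 _ h1
      have h3 : Subgroup.zpowers x = ⊤ := by
        have := congrArg (Subgroup.map (QuotientGroup.mk' K)) h2
        rwa [Subgroup.map_comap_eq_self (by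
          rw [MonoidHom.range_eq_map, Subgroup.map_top_of_surjective _
            (QuotientGroup.mk'_surjective K)]; exact le_top),
          Subgroup.map_top_of_surjective _ (QuotientGroup.mk'_surjective K)] at this
      have : y ∈ Subgroup.zpowers x := by rw [h3]; exact Subgroup.mem_top y
      exact this
  letI : CommGroup (G ⧸ K) := hcyc.commGroup
  have := Abelianization.commutator_subset_ker (QuotientGroup.mk' K)
  rwa [QuotientGroup.ker_mk'] at this

/-- A finite nilpotent group with cyclic abelianization is cyclic. -/
lemma isCyclic_of_cyclic_abelianization (G : Type*) [Group G] [Finite G]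
    [Group.IsNilpotent G] (h : IsCyclic (Abelianization G)) : IsCyclic G := by
  obtain ⟨x, hx⟩ := h
  have hsurj : Function.Surjective (Abelianization.of (G := G)) :=
    QuotientGroup.mk_surjective
  obtain ⟨g, rfl⟩ := hsurj x
  have hsup : Subgroup.zpowers g ⊔ commutator G = ⊤ := by
    rw [eq_top_iff]
    intro y _
    obtain ⟨n, hn⟩ := hx (Abelianization.of y)
    have hn' : Abelianization.of g ^ n = Abelianization.of y := hn
    have h1 : Abelianization.of (g ^ n * y⁻¹) = 1 := by
      rw [map_mul, map_zpow, hn', map_inv, mul_inv_cancel]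
    have hker : g ^ n * y⁻¹ ∈ commutator G := by
      rw [← QuotientGroup.ker_mk' (commutator G)]
      exact h1
    have hy : y = (g ^ n * y⁻¹)⁻¹ * g ^ n := by group
    rw [hy]
    exact mul_mem (Subgroup.mem_sup_right (inv_mem hker))
      (Subgroup.mem_sup_left (Subgroup.zpow_mem _ (Subgroup.mem_zpowers g) n))
  have htop : Subgroup.zpowers g = ⊤ := by
    apply frattini_nongenerating
    rw [eq_top_iff, ← hsup]
    exact sup_le_sup_left (commutator_le_frattini_aux G) _
  refine ⟨g, fun y => ?_⟩
  have : y ∈ Subgroup.zpowers g := by rw [htop]; exact Subgroup.mem_top y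
  exact this

lemma commutator_eq_bot_of_comm (G : Type*) [Group G] (hcomm : ∀ a b : G, a * b = b * a) :
    commutator G = ⊥ := by
  rw [commutator_def, Subgroup.commutator_eq_bot_iff_le_centralizer]
  intro x _
  rw [Subgroup.mem_centralizer_iff]
  intro y _
  exact hcomm y x

lemma map_subtype_derivedSeries (G : Type*) [Group G] (n : ℕ) :
    (derivedSeries (commutator G) n).map (commutator G).subtype = derivedSeries G (n + 1) := by
  induction n with
  | zero =>
    rw [derivedSeries_zero, ← MonoidHom.range_eq_map, Subgroup.range_subtype,
      derivedSeries_one]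
  | succ n ih =>
    rw [derivedSeries_succ, Subgroup.map_commutator, ih, ← derivedSeries_succ]

/-- A `p`-group of order `p ^ k` has derived length at most `(k + 1) / 2`. -/
theorem derivedLength_le_of_card_pow (p k : ℕ) (hp : p.Prime) (D : Type*) [Group D]
    [Fintype D] (hD : Fintype.card D = p ^ k) :
    derivedLength D ≤ (k + 1) / 2 := by
  induction k using Nat.strong_induction_on generalizing D with
  | _ k ih =>
  have hD' : Nat.card D = p ^ k := by rw [Nat.card_eq_fintype_card, hD]
  haveI hpD : IsPGroup p D := IsPGroup.of_card hD'
  haveI : Fact p.Prime := ⟨hp⟩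
  haveI : Group.IsNilpotent D := hpD.isNilpotent
  rcases Nat.lt_or_ge k 2 with hk | hk
  · -- k ≤ 1 : D is trivial or cyclic, hence abelian
    rcases Nat.lt_or_ge k 1 with hk0 | hk1
    · interval_cases k
      haveI : Subsingleton D := by
        rw [← Fintype.card_le_one_iff_subsingleton, hD]; simp
      have h0 : derivedSeries D 0 = ⊥ := Subsingleton.elim _ _
      have : derivedLength D ≤ 0 := Nat.sInf_le h0
      omega
    · interval_cases k
      haveI hcyc : IsCyclic D := isCyclic_of_prime_card (hD'.trans (pow_one p))
      letI : CommGroup D := IsCyclic.commGroup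
      have habel : derivedSeries D 1 = ⊥ := by
        rw [derivedSeries_one]
        exact commutator_eq_bot_of_comm D mul_comm
      have : derivedLength D ≤ 1 := Nat.sInf_le habel
      omega
  · -- k ≥ 2
    set G' := commutator D with hG'
    obtain ⟨j, hjk', hj⟩ : ∃ j, j ≤ k ∧ Nat.card G' = p ^ j := by
      obtain ⟨j, hjle, hcard⟩ := (Nat.dvd_prime_pow hp).mp
        (hD' ▸ Subgroup.card_subgroup_dvd_card G')
      exact ⟨j, hjle, hcard⟩
    have hjk : j ≤ k - 2 := by
      by_contra hcon
      push_neg at hcon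
      have hindex : G'.index * Nat.card G' = p ^ k := by
        rw [← hD', Subgroup.index_mul_card]
      have hidx : G'.index = p ^ (k - j) := by
        have hdvd : G'.index ∣ p ^ k := ⟨_, hindex.symm⟩
        obtain ⟨i, hile, hi⟩ := (Nat.dvd_prime_pow hp).mp hdvd
        have h5 : p ^ (i + j) = p ^ k := by rw [pow_add, ← hi, ← hj, hindex]
        have h6 := Nat.pow_right_injective hp.two_le h5
        have h7 : i = k - j := by omega
        rw [hi, h7]
      have hkj : k - j ≤ 1 := by omega
      have hcyc : IsCyclic (Abelianization D) := by
        have hcard : Nat.card (Abelianization D) = G'.index :=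
          (Subgroup.index_eq_card G').symm
        interval_cases hkjv : k - j
        · haveI : Subsingleton (Abelianization D) := by
            have h1 : Nat.card (Abelianization D) = 1 := by
              rw [hcard, hidx, pow_zero]
            exact (Nat.card_eq_one_iff_unique.mp h1).1
          infer_instance
        · exact isCyclic_of_prime_card (by rw [hcard, hidx, pow_one])
      haveI := isCyclic_of_cyclic_abelianization D hcyc
      letI : CommGroup D := IsCyclic.commGroup
      have hbot : commutator D = ⊥ := commutator_eq_bot_of_comm D mul_comm
      have hone : Nat.card G' = 1 := by
        rw [hG', hbot]; exact Subgroup.card_bot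
      rw [hj] at hone
      have hj0 : j = 0 := by
        by_contra hj0
        exact absurd hone (Nat.ne_of_gt (Nat.one_lt_pow hj0 hp.one_lt))
      omega
    -- apply the induction hypothesis to G'
    haveI : Fintype G' := Fintype.ofFinite _
    have hjfin : Fintype.card G' = p ^ j := by rw [← Nat.card_eq_fintype_card, hj]
    have hlen : derivedLength G' ≤ (j + 1) / 2 := ih j (by omega) G' hjfin
    haveI : Group.IsSolvable G' := by
      haveI : IsPGroup p G' := hpD.to_subgroup G'
      haveI : Group.IsNilpotent G' := IsPGroup.isNilpotent ‹IsPGroup p G'›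
      infer_instance
    have hne : {n : ℕ | derivedSeries G' n = ⊥}.Nonempty := by
      obtain ⟨n, hn⟩ := Group.IsSolvable.solvable (G := G')
      exact ⟨n, hn⟩
    have hmem : derivedSeries G' (derivedLength G') = ⊥ := Nat.sInf_mem hne
    have hD2 : derivedSeries D (derivedLength G' + 1) = ⊥ := by
      rw [← map_subtype_derivedSeries, hmem, Subgroup.map_bot]
    have hstep : derivedLength D ≤ derivedLength G' + 1 := Nat.sInf_le hD2
    omega
end

section
/- If a finite group G has a component K (a subnormal quasisimple subgroup), then the normal closure N of K in G is the product of the G-conjugates of K, and this product is a central product of components. -/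
/-- A subgroup `H ≤ G` is subnormal if there is a chain `H = c 0 ⊴ c 1 ⊴ ⋯ ⊴ c n = ⊤`. -/
def IsSubnormal {G : Type*} [Group G] (H : Subgroup G) : Prop :=
  ∃ (n : ℕ) (c : ℕ → Subgroup G), c 0 = H ∧ c n = ⊤ ∧
    ∀ i < n, c i ≤ c (i + 1) ∧ ((c i).subgroupOf (c (i + 1))).Normal

/-- A subgroup is quasisimple if it is perfect, nontrivial, and simple modulo its center. -/
def IsQuasisimple {G : Type*} [Group G] (H : Subgroup G) : Prop :=
  H ≠ ⊥ ∧ ⁅H, H⁆ = H ∧ IsSimpleGroup (↥H ⧸ Subgroup.center ↥H)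

/-- A component of `G` is a subnormal quasisimple subgroup. -/
def IsComponent {G : Type*} [Group G] (H : Subgroup G) : Prop :=
  IsSubnormal H ∧ IsQuasisimple H

open Pointwise
open scoped commutatorElement

section Aux

variable {G : Type*} [Group G]

/-- A chain with elementwise normality conditions. -/
def AuxChain (c : ℕ → Subgroup G) (n : ℕ) : Prop :=
  ∀ i < n, c i ≤ c (i + 1) ∧ ∀ x ∈ c (i + 1), ∀ y ∈ c i, x * y * x⁻¹ ∈ c i

theorem isSubnormal_iff_auxChain (H : Subgroup G) :
    IsSubnormal H ↔ ∃ (n : ℕ) (c : ℕ → Subgroup G), c 0 = H ∧ c n = ⊤ ∧ AuxChain c n := by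
  constructor
  · rintro ⟨n, c, h0, hn, hc⟩
    refine ⟨n, c, h0, hn, fun i hi => ⟨(hc i hi).1, fun x hx y hy => ?_⟩⟩
    exact (Subgroup.normal_subgroupOf_iff (hc i hi).1).mp (hc i hi).2 y x hy hx
  · rintro ⟨n, c, h0, hn, hc⟩
    refine ⟨n, c, h0, hn, fun i hi => ⟨(hc i hi).1, ?_⟩⟩
    exact (Subgroup.normal_subgroupOf_iff (hc i hi).1).mpr fun h k hh hk =>
      (hc i hi).2 k hk h hh

theorem auxChain_zero_le {c : ℕ → Subgroup G} {n : ℕ} (hc : AuxChain c n) : c 0 ≤ c n := by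
  induction n with
  | zero => exact le_rfl
  | succ n ih =>
    exact (ih fun i hi => hc i (Nat.lt_succ_of_lt hi)).trans (hc n (Nat.lt_succ_self n)).1

/-- Core lemma: a quasisimple subgroup subnormal in `L` is contained in, or commutes with,
any subgroup normal in `L`. -/
theorem quasisimple_le_or_commutator_bot (K : Subgroup G)
    (hperf : ⁅K, K⁆ = K) (hsimple : IsSimpleGroup (↥K ⧸ Subgroup.center ↥K)) :
    ∀ (n : ℕ) (c : ℕ → Subgroup G), c 0 = K → AuxChain c n →
      ∀ N : Subgroup G, N ≤ c n → (∀ x ∈ c n, ∀ y ∈ N, x * y * x⁻¹ ∈ N) →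
        K ≤ N ∨ ⁅K, N⁆ = ⊥ := by
  intro n
  induction n with
  | zero =>
    intro c h0 _ N hNle hNnorm
    rw [h0] at hNle hNnorm
    -- N is normal in K
    have hM : (N.subgroupOf K).Normal :=
      (Subgroup.normal_subgroupOf_iff hNle).mpr fun h k hh hk => hNnorm k hk h hh
    set π := QuotientGroup.mk' (Subgroup.center ↥K)
    have hπsurj : Function.Surjective π := QuotientGroup.mk'_surjective _
    have := (hM.map π hπsurj).eq_bot_or_eq_top
    rcases this with hbot | htop
    · -- N is central in K, so K commutes with N
      right
      rw [eq_bot_iff, Subgroup.commutator_le]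
      intro g hg y hy
      have hyK : y ∈ K := hNle hy
      have : (⟨y, hyK⟩ : ↥K) ∈ Subgroup.center ↥K := by
        have hmem : (⟨y, hyK⟩ : ↥K) ∈ N.subgroupOf K := Subgroup.mem_subgroupOf.mpr hy
        have : (⟨y, hyK⟩ : ↥K) ∈ (π : ↥K →* _).ker := by
          rw [Subgroup.map_eq_bot_iff] at hbot
          exact hbot hmem
        rwa [QuotientGroup.ker_mk'] at this
      have hcomm := Subgroup.mem_center_iff.mp this (⟨g, hg⟩ : ↥K)
      have hgy : g * y = y * g := by simpa [Subtype.ext_iff] using hcomm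
      rw [Subgroup.mem_bot, commutatorElement_eq_one_iff_commute]
      exact hgy
    · -- N together with the center is all of K; perfectness forces K ≤ N
      left
      have hsup : N.subgroupOf K ⊔ Subgroup.center ↥K = ⊤ := by
        have := congrArg (Subgroup.comap (π : ↥K →* _)) htop
        rwa [Subgroup.comap_map_eq, QuotientGroup.ker_mk', Subgroup.comap_top] at this
      -- the quotient K / (N.subgroupOf K) is abelian, so commutators lie in N
      have hcommle : ⁅(⊤ : Subgroup ↥K), (⊤ : Subgroup ↥K)⁆ ≤ N.subgroupOf K := by
        rw [Subgroup.commutator_le]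
        intro a _ b _
        set π' := QuotientGroup.mk' (N.subgroupOf K)
        have key : ∀ z : ↥K, ∃ w : ↥K, w ∈ Subgroup.center ↥K ∧ π' z = π' w := by
          intro z
          have hz : z ∈ N.subgroupOf K ⊔ Subgroup.center ↥K := by rw [hsup]; trivial
          have : (z : ↥K) ∈ ((N.subgroupOf K : Set ↥K) * (Subgroup.center ↥K : Set ↥K)) := by
            rw [← Subgroup.normal_mul]; exact_mod_cast hz
          obtain ⟨m, hm, w, hw, hmw⟩ := this
          refine ⟨w, hw, ?_⟩
          rw [← hmw, map_mul]
          have : π' m = 1 := by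
            rw [← MonoidHom.mem_ker, QuotientGroup.ker_mk']; exact hm
          rw [this, one_mul]
        obtain ⟨wa, hwa, hpa⟩ := key a
        obtain ⟨wb, hwb, hpb⟩ := key b
        have : π' ⁅a, b⁆ = 1 := by
          rw [map_commutatorElement, hpa, hpb, ← map_commutatorElement,
            commutatorElement_eq_one_iff_commute.mpr
              ((Subgroup.mem_center_iff.mp hwa wb).symm), map_one]
        rw [← QuotientGroup.ker_mk' (N.subgroupOf K), MonoidHom.mem_ker]
        exact this
      have hmaptop : Subgroup.map K.subtype ⊤ = K := by
        rw [← MonoidHom.range_eq_map, Subgroup.range_subtype]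
      have hperfK : ⁅(⊤ : Subgroup ↥K), (⊤ : Subgroup ↥K)⁆ = ⊤ := by
        apply Subgroup.map_injective K.subtype_injective
        rw [Subgroup.map_commutator, hmaptop, hperf]
      rw [hperfK, top_le_iff] at hcommle
      intro y hy
      have : (⟨y, hy⟩ : ↥K) ∈ N.subgroupOf K := by rw [hcommle]; trivial
      exact Subgroup.mem_subgroupOf.mp this
  | succ n ih =>
    intro c h0 hc N hNle hNnorm
    have hcn : AuxChain c n := fun i hi => hc i (Nat.lt_succ_of_lt hi)
    have hcnle : c n ≤ c (n + 1) := (hc n (Nat.lt_succ_self n)).1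
    have hcnnorm := (hc n (Nat.lt_succ_self n)).2
    set M0 := N ⊓ c n with hM0
    have hM0le : M0 ≤ c n := inf_le_right
    have hM0norm : ∀ x ∈ c n, ∀ y ∈ M0, x * y * x⁻¹ ∈ M0 := fun x hx y hy =>
      ⟨hNnorm x (hcnle hx) y hy.1, (c n).mul_mem ((c n).mul_mem hx hy.2) ((c n).inv_mem hx)⟩
    rcases ih c h0 hcn M0 hM0le hM0norm with hKM0 | hKM0
    · exact Or.inl (hKM0.trans inf_le_left)
    · right
      have hKcn : K ≤ c n := h0 ▸ auxChain_zero_le hcn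
      have hKNle : ⁅K, N⁆ ≤ M0 := by
        refine le_trans (Subgroup.commutator_mono hKcn le_rfl) ?_
        rw [Subgroup.commutator_le]
        intro x hx y hy
        constructor
        · have h1 : x * y * x⁻¹ ∈ N := hNnorm x (hcnle hx) y hy
          simpa [commutatorElement_def, mul_assoc] using mul_mem h1 (inv_mem hy)
        · have h1 : y * x⁻¹ * y⁻¹ ∈ c n := hcnnorm y (hNle hy) x⁻¹ (inv_mem hx)
          have := mul_mem hx h1
          simpa [commutatorElement_def, mul_assoc] using this
      have hM0K : ⁅M0, K⁆ = ⊥ := by rw [Subgroup.commutator_comm]; exact hKM0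
      have h1 : ⁅⁅K, N⁆, K⁆ = ⊥ :=
        le_bot_iff.mp (hM0K ▸ Subgroup.commutator_mono hKNle le_rfl)
      have h2 : ⁅⁅N, K⁆, K⁆ = ⊥ := by
        rw [Subgroup.commutator_comm N K]; exact h1
      have := Subgroup.commutator_commutator_eq_bot_of_rotate h1 h2
      rwa [hperf] at this

/-- A component is contained in, or commutes with, any subnormal subgroup. -/
theorem component_le_or_commutator_bot (K : Subgroup G)
    (hperf : ⁅K, K⁆ = K) (hsimple : IsSimpleGroup (↥K ⧸ Subgroup.center ↥K))
    (cK : ℕ → Subgroup G) (nK : ℕ) (hcK0 : cK 0 = K) (hcKtop : cK nK = ⊤)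
    (hcK : AuxChain cK nK) :
    ∀ (m : ℕ) (d : ℕ → Subgroup G), AuxChain d m → K ≤ d m →
      K ≤ d 0 ∨ ⁅K, d 0⁆ = ⊥ := by
  intro m
  induction m with
  | zero => intro d _ h; exact Or.inl h
  | succ m ih =>
    intro d hd hKd
    have hd' : AuxChain (fun i => d (i + 1)) m := fun i hi => hd (i + 1) (by omega)
    rcases ih (fun i => d (i + 1)) hd' hKd with hK1 | hK1
    · -- K ≤ d 1; apply the core lemma inside d 1
      have hd01 : d 0 ≤ d 1 := (hd 0 (Nat.succ_pos m)).1
      have hd0norm : ∀ x ∈ d 1, ∀ y ∈ d 0, x * y * x⁻¹ ∈ d 0 := (hd 0 (Nat.succ_pos m)).2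
      -- intersected chain from K to d 1
      have hc' : AuxChain (fun i => cK i ⊓ d 1) nK := by
        intro i hi
        refine ⟨inf_le_inf_right _ (hcK i hi).1, ?_⟩
        rintro x ⟨hx1, hx2⟩ y ⟨hy1, hy2⟩
        exact ⟨(hcK i hi).2 x hx1 y hy1, (d 1).mul_mem ((d 1).mul_mem hx2 hy2) ((d 1).inv_mem hx2)⟩
      have h0' : cK 0 ⊓ d 1 = K := by
        rw [hcK0]; exact inf_eq_left.mpr hK1
      have hn' : cK nK ⊓ d 1 = d 1 := by
        rw [hcKtop]; exact top_inf_eq _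
      have := quasisimple_le_or_commutator_bot K hperf hsimple nK (fun i => cK i ⊓ d 1)
        h0' hc' (d 0)
        (le_inf (le_trans hd01 (by rw [hcKtop]; exact le_top)) hd01)
        (fun x hx y hy => hd0norm x hx.2 y hy)
      exact this
    · right
      rw [eq_bot_iff, ← hK1]
      exact Subgroup.commutator_mono le_rfl (hd 0 (Nat.succ_pos m)).1

/-- Distinct components commute elementwise. -/
theorem components_commute {H L : Subgroup G} (hH : IsComponent H) (hL : IsComponent L)
    (hne : H ≠ L) : ⁅H, L⁆ = ⊥ := by
  obtain ⟨hHsub, hHbot, hHperf, hHsimp⟩ := hH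
  obtain ⟨hLsub, hLbot, hLperf, hLsimp⟩ := hL
  obtain ⟨nH, cH, hcH0, hcHtop, hcH⟩ := (isSubnormal_iff_auxChain H).mp hHsub
  obtain ⟨nL, cL, hcL0, hcLtop, hcL⟩ := (isSubnormal_iff_auxChain L).mp hLsub
  have h1 := component_le_or_commutator_bot H hHperf hHsimp cH nH hcH0 hcHtop hcH nL cL hcL
    (by rw [hcLtop]; exact le_top)
  rw [hcL0] at h1
  rcases h1 with h1 | h1
  · have h2 := component_le_or_commutator_bot L hLperf hLsimp cL nL hcL0 hcLtop hcL nH cH hcH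
      (by rw [hcHtop]; exact le_top)
    rw [hcH0] at h2
    rcases h2 with h2 | h2
    · exact absurd (le_antisymm h1 h2) hne
    · -- ⁅L, H⁆ = ⊥ with H ≤ L forces H abelian, contradiction with perfection
      exfalso
      apply hHbot
      rw [← hHperf, eq_bot_iff, ← h2]
      exact Subgroup.commutator_mono h1 le_rfl
    -- unreachable
  · exact h1

theorem mem_conj_map {K : Subgroup G} {g x : G} :
    x ∈ K.map (MulAut.conj g).toMonoidHom ↔ g⁻¹ * x * g ∈ K := by
  constructor
  · rintro ⟨y, hy, rfl⟩
    simpa [MulAut.conj, mul_assoc] using hy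
  · intro h
    exact ⟨g⁻¹ * x * g, h, by simp [MulAut.conj, mul_assoc]⟩

/-- The center is mapped to the center under a group isomorphism. -/
theorem map_center_mulEquiv {A B : Type*} [Group A] [Group B] (e : A ≃* B) :
    (Subgroup.center A).map e.toMonoidHom = Subgroup.center B := by
  ext b
  constructor
  · rintro ⟨a, ha, rfl⟩
    rw [Subgroup.mem_center_iff]
    intro b'
    have := Subgroup.mem_center_iff.mp ha (e.symm b')
    calc b' * e a = e (e.symm b' * a) := by simp
      _ = e (a * e.symm b') := by rw [this]
      _ = e a * b' := by simp
  · intro hb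
    refine ⟨e.symm b, ?_, by simp⟩
    show e.symm b ∈ Subgroup.center A
    rw [Subgroup.mem_center_iff]
    intro a
    have := Subgroup.mem_center_iff.mp hb (e a)
    apply e.injective
    calc e (a * e.symm b) = e a * b := by simp
      _ = b * e a := this
      _ = e (e.symm b * a) := by simp

/-- A conjugate of a component is a component. -/
theorem isComponent_conj {K : Subgroup G} (hK : IsComponent K) (g : G) :
    IsComponent (K.map (MulAut.conj g).toMonoidHom) := by
  obtain ⟨hsub, hbot, hperf, hsimp⟩ := hK
  set f := (MulAut.conj g).toMonoidHom with hf
  have hfinj : Function.Injective f := (MulAut.conj g).injective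
  have hfsurj : Function.Surjective f := (MulAut.conj g).surjective
  refine ⟨?_, ?_, ?_, ?_⟩
  · -- subnormal
    obtain ⟨n, c, h0, hn, hc⟩ := (isSubnormal_iff_auxChain K).mp hsub
    rw [isSubnormal_iff_auxChain]
    refine ⟨n, fun i => (c i).map f, congrArg (Subgroup.map f) h0,
      by simp only [hn]; exact Subgroup.map_top_of_surjective _ hfsurj, ?_⟩
    intro i hi
    refine ⟨Subgroup.map_mono (hc i hi).1, ?_⟩
    rintro x ⟨a, ha, rfl⟩ y ⟨b, hb, rfl⟩
    exact ⟨a * b * a⁻¹, (hc i hi).2 a ha b hb, by simp [mul_assoc]⟩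
  · -- nontrivial
    rw [Ne, Subgroup.map_eq_bot_iff_of_injective _ hfinj]
    exact hbot
  · -- perfect
    rw [← Subgroup.map_commutator, hperf]
  · -- simple central quotient
    set e := Subgroup.equivMapOfInjective K f hfinj with he
    have hcenter : (Subgroup.center ↥K).map e.toMonoidHom
        = Subgroup.center ↥(K.map f) := map_center_mulEquiv e
    have equot := QuotientGroup.congr (Subgroup.center ↥K) (Subgroup.center ↥(K.map f))
      e hcenter
    haveI : Nontrivial (↥(K.map f) ⧸ Subgroup.center ↥(K.map f)) :=
      equot.toEquiv.symm.nontrivial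
    exact IsSimpleGroup.isSimpleGroup_of_surjective equot.toMonoidHom equot.surjective

end Aux

/-- If `K` is a component of the finite group `G`, then the normal closure of `K` in `G` is
the product of the `G`-conjugates of `K`, and this product is a central product of
components: distinct conjugates are components commuting elementwise. -/
theorem normalClosure_component (G : Type*) [Group G] [Finite G] (K : Subgroup G)
    (hK : IsComponent K) :
    (Subgroup.normalClosure (K : Set G)
        = ⨆ g : G, K.map (MulAut.conj g).toMonoidHom) ∧
      (∀ g : G, IsComponent (K.map (MulAut.conj g).toMonoidHom)) ∧
      ∀ g h : G, K.map (MulAut.conj g).toMonoidHom ≠ K.map (MulAut.conj h).toMonoidHom →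
        ∀ x ∈ K.map (MulAut.conj g).toMonoidHom, ∀ y ∈ K.map (MulAut.conj h).toMonoidHom,
          Commute x y := by
  have hmap1 : K.map (MulAut.conj (1 : G)).toMonoidHom = K := by
    ext x; rw [mem_conj_map]; simp
  refine ⟨?_, fun g => isComponent_conj hK g, ?_⟩
  · set S := ⨆ g : G, K.map (MulAut.conj g).toMonoidHom with hS
    have hSnormal : S.Normal := by
      constructor
      intro x hx h
      have hmem : h * x * h⁻¹ ∈ S.map (MulAut.conj h).toMonoidHom :=
        ⟨x, hx, rfl⟩
      have hSmap : S.map (MulAut.conj h).toMonoidHom ≤ S := by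
        rw [hS, Subgroup.map_iSup]
        refine iSup_le fun g => ?_
        have : (K.map (MulAut.conj g).toMonoidHom).map (MulAut.conj h).toMonoidHom
            = K.map (MulAut.conj (h * g)).toMonoidHom := by
          rw [Subgroup.map_map]
          congr 1
          ext x
          simp [MulAut.conj, mul_assoc]
        rw [this]
        exact le_iSup (fun g : G => K.map (MulAut.conj g).toMonoidHom) (h * g)
      exact hSmap hmem
    have hKS : (K : Set G) ⊆ S := by
      intro x hx
      have : x ∈ K.map (MulAut.conj (1 : G)).toMonoidHom := by rw [hmap1]; exact hx
      exact (le_iSup (fun g : G => K.map (MulAut.conj g).toMonoidHom) 1) this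
    refine le_antisymm ?_ ?_
    · exact Subgroup.normalClosure_le_normal hKS
    · refine iSup_le fun g => ?_
      rintro x ⟨y, hy, rfl⟩
      have hN : (Subgroup.normalClosure (K : Set G)).Normal := Subgroup.normalClosure_normal
      exact hN.conj_mem y (Subgroup.subset_normalClosure hy) g
  · intro g h hne x hx y hy
    have hcomm : ⁅K.map (MulAut.conj g).toMonoidHom, K.map (MulAut.conj h).toMonoidHom⁆ = ⊥ :=
      components_commute (isComponent_conj hK g) (isComponent_conj hK h) hne
    have : ⁅x, y⁆ ∈ (⊥ : Subgroup G) := hcomm ▸ Subgroup.commutator_mem_commutator hx hy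
    rw [Subgroup.mem_bot] at this
    exact commutatorElement_eq_one_iff_commute.mp this
end

section
/- The Sylow p-subgroups of GL_n(q), where q is a power of the prime p, have nilpotency class exactly n−1 (for n ≥ 2). -/
open Matrix

open scoped commutatorElement

namespace SylowGLAux

variable {n : ℕ} {F : Type*} [Field F]

/-- `sod a M`: entries of `M` vanish unless `j > i + a`. -/
def sod (a : ℕ) (M : Matrix (Fin n) (Fin n) F) : Prop :=
  ∀ i j : Fin n, (j : ℕ) ≤ (i : ℕ) + a → M i j = 0

lemma sod.mono {a b : ℕ} (h : a ≤ b) {M : Matrix (Fin n) (Fin n) F} (hM : sod b M) :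
    sod a M := fun i j hij => hM i j (hij.trans (by omega))

lemma sod.add {a : ℕ} {M N : Matrix (Fin n) (Fin n) F} (hM : sod a M) (hN : sod a N) :
    sod a (M + N) := fun i j hij => by
  simp [Matrix.add_apply, hM i j hij, hN i j hij]

lemma sod.zero {a : ℕ} : sod a (0 : Matrix (Fin n) (Fin n) F) := fun _ _ _ => rfl

lemma sod.neg {a : ℕ} {M : Matrix (Fin n) (Fin n) F} (hM : sod a M) : sod a (-M) :=
  fun i j hij => by simp [Matrix.neg_apply, hM i j hij]

lemma sod.mul {a b : ℕ} {M N : Matrix (Fin n) (Fin n) F} (hM : sod a M) (hN : sod b N) :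
    sod (a + b + 1) (M * N) := by
  intro i j hij
  rw [Matrix.mul_apply]
  refine Finset.sum_eq_zero fun l _ => ?_
  by_cases hl : (l : ℕ) ≤ (i : ℕ) + a
  · rw [hM i l hl, zero_mul]
  · rw [hN l j (by omega), mul_zero]

variable [Fintype F]

/-- The subgroup of `GL n F` of unitriangular matrices vanishing on the first `a`
superdiagonals. -/
def up (n : ℕ) (F : Type*) [Field F] [Fintype F] (a : ℕ) : Subgroup (GL (Fin n) F) where
  carrier := {x | sod a ((x : Matrix (Fin n) (Fin n) F) - 1)}
  one_mem' := by
    simpa using (sod.zero : sod (n := n) (F := F) a 0)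
  mul_mem' := by
    intro x y hx hy
    have key : ((x * y : GL (Fin n) F) : Matrix (Fin n) (Fin n) F) - 1 =
        (((x : Matrix (Fin n) (Fin n) F) - 1) * ((y : Matrix (Fin n) (Fin n) F) - 1)) +
          (((x : Matrix (Fin n) (Fin n) F) - 1) + ((y : Matrix (Fin n) (Fin n) F) - 1)) := by
      simp only [Units.val_mul]
      noncomm_ring
    rw [Set.mem_setOf_eq, key]
    exact (((hx.mul hy).mono (by omega)).add (hx.add hy))
  inv_mem' := by
    intro x hx
    have hpow : ∀ k : ℕ, sod a (((x ^ k : GL (Fin n) F) : Matrix (Fin n) (Fin n) F) - 1) := by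
      intro k
      induction k with
      | zero => simpa using (sod.zero : sod (n := n) (F := F) a 0)
      | succ k ih =>
        have key : ((x ^ (k+1) : GL (Fin n) F) : Matrix (Fin n) (Fin n) F) - 1 =
            (((x ^ k : GL (Fin n) F) : Matrix (Fin n) (Fin n) F) - 1) *
              ((x : Matrix (Fin n) (Fin n) F) - 1) +
            ((((x ^ k : GL (Fin n) F) : Matrix (Fin n) (Fin n) F) - 1) +
              ((x : Matrix (Fin n) (Fin n) F) - 1)) := by
          rw [pow_succ, Units.val_mul]
          noncomm_ring
        rw [key]
        exact ((ih.mul hx).mono (by omega)).add (ih.add hx)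
    have h1 : x ^ orderOf x = 1 := pow_orderOf_eq_one x
    have h0 : 0 < orderOf x := orderOf_pos x
    have hxinv : x⁻¹ = x ^ (orderOf x - 1) := by
      rw [inv_eq_iff_mul_eq_one, ← pow_succ', Nat.sub_add_cancel h0, h1]
    rw [Set.mem_setOf_eq, hxinv]
    exact hpow _

lemma mem_up_iff {a : ℕ} {x : GL (Fin n) F} :
    x ∈ up n F a ↔ sod a ((x : Matrix (Fin n) (Fin n) F) - 1) := Iff.rfl

lemma up_antitone {a b : ℕ} (h : a ≤ b) : up n F b ≤ up n F a :=
  fun _ hx => (hx : sod _ _).mono h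

lemma commutator_mem_up {a b : ℕ} {x y : GL (Fin n) F} (hx : x ∈ up n F a)
    (hy : y ∈ up n F b) : ⁅x, y⁆ ∈ up n F (a + b + 1) := by
  have hx0 : x⁻¹ ∈ up n F 0 := up_antitone (Nat.zero_le a) ((up n F a).inv_mem hx)
  have hy0 : y⁻¹ ∈ up n F 0 := up_antitone (Nat.zero_le b) ((up n F b).inv_mem hy)
  have hz : (x⁻¹ * y⁻¹) ∈ up n F 0 := (up n F 0).mul_mem hx0 hy0
  rw [mem_up_iff]
  set A := (x : Matrix (Fin n) (Fin n) F) with hA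
  set B := (y : Matrix (Fin n) (Fin n) F) with hB
  set A' := ((x⁻¹ : GL (Fin n) F) : Matrix (Fin n) (Fin n) F) with hA'
  set B' := ((y⁻¹ : GL (Fin n) F) : Matrix (Fin n) (Fin n) F) with hB'
  have hxA : A * A' = 1 := by
    rw [hA, hA', ← Units.val_mul, mul_inv_cancel, Units.val_one]
  have hyA : B * B' = 1 := by
    rw [hB, hB', ← Units.val_mul, mul_inv_cancel, Units.val_one]
  have hcval : ((⁅x, y⁆ : GL (Fin n) F) : Matrix (Fin n) (Fin n) F) = A * B * A' * B' := by
    rw [commutatorElement_def]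
    simp only [Units.val_mul]
    rfl
  have hzval : ((x⁻¹ * y⁻¹ : GL (Fin n) F) : Matrix (Fin n) (Fin n) F) = A' * B' := by
    simp only [Units.val_mul]
    rfl
  have key : ((⁅x, y⁆ : GL (Fin n) F) : Matrix (Fin n) (Fin n) F) - 1 =
      ((A - 1) * (B - 1) - (B - 1) * (A - 1)) *
        (((x⁻¹ * y⁻¹ : GL (Fin n) F) : Matrix (Fin n) (Fin n) F) - 1) +
      ((A - 1) * (B - 1) - (B - 1) * (A - 1)) := by
    have hxy : (A * B - B * A) * (A' * B') =
        ((⁅x, y⁆ : GL (Fin n) F) : Matrix (Fin n) (Fin n) F) - 1 := by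
      rw [hcval, sub_mul]
      have h2 : (B * A) * (A' * B') = 1 := by
        rw [show (B * A) * (A' * B') = B * (A * A') * B' by noncomm_ring, hxA, mul_one, hyA]
      rw [h2]
      noncomm_ring
    rw [← hxy, hzval]
    noncomm_ring
  have hcomm : sod (a + b + 1) ((A - 1) * (B - 1) - (B - 1) * (A - 1)) := by
    have h1 : sod (a + b + 1) ((A - 1) * (B - 1)) := hx.mul hy
    have h2 : sod (a + b + 1) ((B - 1) * (A - 1)) :=
      (hy.mul hx).mono (le_of_eq (by omega))
    simpa [sub_eq_add_neg] using h1.add h2.neg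
  rw [key]
  exact ((hcomm.mul hz).mono (by omega)).add hcomm


lemma up_bot (hn : 0 < n) : up n F (n - 1) = ⊥ := by
  refine le_antisymm (fun x hx => ?_) bot_le
  have : (x : Matrix (Fin n) (Fin n) F) - 1 = 0 := by
    ext i j
    exact hx i j (by omega)
  have hval : (x : Matrix (Fin n) (Fin n) F) = 1 := by
    rwa [sub_eq_zero] at this
  exact Subgroup.mem_bot.mpr (Units.ext hval)

lemma lcs_le_up (k : ℕ) :
    Subgroup.lowerCentralSeries (⊤ : Subgroup ↥(up n F 0)) k ≤ (up n F k).subgroupOf (up n F 0) := by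
  induction k with
  | zero =>
    simp [Subgroup.subgroupOf_self]
  | succ k ih =>
    rw [lowerCentralSeries_succ]
    refine Subgroup.commutator_le.mpr fun g hg h _ => ?_
    have hgk : (g : GL (Fin n) F) ∈ up n F k := ih hg
    have hh0 : (h : GL (Fin n) F) ∈ up n F 0 := h.2
    have hcm := commutator_mem_up hgk hh0
    have heq : ((⁅g, h⁆ : ↥(up n F 0)) : GL (Fin n) F) = ⁅(g : GL (Fin n) F), (h : GL (Fin n) F)⁆ := rfl
    exact (Subgroup.mem_subgroupOf).mpr (by rw [heq]; simpa using hcm)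

/-- The elementary unipotent matrix `1 + E i j` as a unit. -/
def elemU (i j : Fin n) (hij : i ≠ j) : GL (Fin n) F :=
  ⟨1 + Matrix.single i j (1 : F), 1 - Matrix.single i j (1 : F), by
    have hE : Matrix.single i j (1 : F) * Matrix.single i j (1 : F) = 0 :=
      Matrix.single_mul_single_of_ne _ _ _ _ (Ne.symm hij) _
    rw [mul_sub, add_mul, add_mul, hE]
    noncomm_ring, by
    have hE : Matrix.single i j (1 : F) * Matrix.single i j (1 : F) = 0 :=
      Matrix.single_mul_single_of_ne _ _ _ _ (Ne.symm hij) _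
    rw [sub_mul, mul_add, mul_add, hE]
    noncomm_ring⟩

@[simp] lemma elemU_val (i j : Fin n) (hij : i ≠ j) :
    ((elemU i j hij : GL (Fin n) F) : Matrix (Fin n) (Fin n) F) =
      1 + Matrix.single i j (1 : F) := rfl

lemma elemU_mem_up {a : ℕ} {i j : Fin n} (hij : (i : ℕ) + a < (j : ℕ)) :
    (elemU i j (fun h => by subst h; omega) : GL (Fin n) F) ∈ up n F a := by
  rw [mem_up_iff]
  intro i' j' hij'
  have : ¬(i' = i ∧ j' = j) := by
    rintro ⟨rfl, rfl⟩; omega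
  rw [elemU_val, add_sub_cancel_left]
  exact Matrix.single_apply_of_ne i j 1 i' j' (by tauto)

lemma elemU_commutator {i j k : Fin n} (hij : i < j) (hjk : j < k) :
    ⁅(elemU i j hij.ne : GL (Fin n) F), elemU j k hjk.ne⁆ =
      (elemU i k (hij.trans hjk).ne : GL (Fin n) F) := by
  have hik : i ≠ k := (hij.trans hjk).ne
  have hki : k ≠ i := (hij.trans hjk).ne'
  have hji : j ≠ i := hij.ne'
  have hkj : k ≠ j := hjk.ne'
  apply Units.ext
  rw [commutatorElement_def]
  simp only [Units.val_mul]
  have hinv1 : ((elemU i j hij.ne : GL (Fin n) F)⁻¹ : GL (Fin n) F).val =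
      1 - Matrix.single i j (1 : F) := rfl
  have hinv2 : ((elemU j k hjk.ne : GL (Fin n) F)⁻¹ : GL (Fin n) F).val =
      1 - Matrix.single j k (1 : F) := rfl
  rw [hinv1, hinv2, elemU_val, elemU_val, elemU_val]
  clear hinv1 hinv2
  have h1 : Matrix.single i j (1:F) * Matrix.single j k (1:F) = Matrix.single i k (1:F) := by
    simp
  have h2 : Matrix.single i j (1:F) * Matrix.single i j (1:F) = 0 :=
    Matrix.single_mul_single_of_ne _ _ _ _ hji _
  have h3 : Matrix.single j k (1:F) * Matrix.single j k (1:F) = 0 :=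
    Matrix.single_mul_single_of_ne _ _ _ _ hkj _
  have h4 : Matrix.single j k (1:F) * Matrix.single i j (1:F) = 0 :=
    Matrix.single_mul_single_of_ne _ _ _ _ hki _
  have h5 : Matrix.single i k (1:F) * Matrix.single i j (1:F) = 0 :=
    Matrix.single_mul_single_of_ne _ _ _ _ hki _
  have h6 : Matrix.single i k (1:F) * Matrix.single j k (1:F) = 0 :=
    Matrix.single_mul_single_of_ne _ _ _ _ hkj _
  set Eij := Matrix.single i j (1 : F)
  set Ejk := Matrix.single j k (1 : F)
  set Eik := Matrix.single i k (1 : F)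
  have key : (1 + Eij) * (1 + Ejk) = 1 + Eij + Ejk + Eik := by
    rw [add_mul, one_mul, mul_add, mul_one, h1]; abel
  have key2 : (1 + Eij + Ejk + Eik) * (1 - Eij) = 1 + Ejk + Eik := by
    rw [mul_sub, mul_one, add_mul, add_mul, add_mul, one_mul, h2, h4, h5]; abel
  have key3 : (1 + Ejk + Eik) * (1 - Ejk) = 1 + Eik := by
    rw [mul_sub, mul_one, add_mul, add_mul, one_mul, h3, h6]; abel
  rw [key, key2, key3]


lemma elemU_ne_one {i j : Fin n} (hij : i ≠ j) : (elemU i j hij : GL (Fin n) F) ≠ 1 := by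
  intro h
  have h2 := congrArg (fun u : GL (Fin n) F => (u : Matrix (Fin n) (Fin n) F) i j) h
  simp only [elemU_val, Units.val_one, Matrix.add_apply,
    Matrix.single_apply_same, Matrix.one_apply_ne hij] at h2
  rw [zero_add] at h2
  exact one_ne_zero h2

lemma chain_mem_lcs : ∀ k : ℕ, ∀ hk : k + 1 < n,
    (⟨elemU ⟨0, by omega⟩ ⟨k + 1, by omega⟩ (by simp only [ne_eq, Fin.mk.injEq]; omega),
        elemU_mem_up (by simp only [Fin.val_mk]; omega)⟩ : ↥(up n F 0)) ∈
      Subgroup.lowerCentralSeries (⊤ : Subgroup ↥(up n F 0)) k := by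
  intro k
  induction k with
  | zero => intro _; simp [lowerCentralSeries_zero]
  | succ k ih =>
    intro hk
    have hk' : k + 1 < n := by omega
    have hg := ih hk'
    set g : ↥(up n F 0) := ⟨elemU ⟨0, by omega⟩ ⟨k + 1, by omega⟩ (by simp only [ne_eq, Fin.mk.injEq]; omega),
      elemU_mem_up (by simp only [Fin.val_mk]; omega)⟩ with hgdef
    have hmemh : (elemU (⟨k + 1, by omega⟩ : Fin n) ⟨k + 2, by omega⟩
        (by simp only [ne_eq, Fin.mk.injEq]; omega) : GL (Fin n) F) ∈ up n F 0 :=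
      elemU_mem_up (by simp only [Fin.val_mk]; omega)
    set h : ↥(up n F 0) := ⟨elemU ⟨k + 1, by omega⟩ ⟨k + 2, by omega⟩
      (by simp only [ne_eq, Fin.mk.injEq]; omega), hmemh⟩ with hhdef
    have hcomm : ⁅g, h⁆ ∈ Subgroup.lowerCentralSeries (⊤ : Subgroup ↥(up n F 0)) (k + 1) := by
      rw [lowerCentralSeries_succ]
      exact Subgroup.commutator_mem_commutator hg (Subgroup.mem_top h)
    have hval : ⁅g, h⁆ = (⟨elemU ⟨0, by omega⟩ ⟨k + 2, by omega⟩ (by simp only [ne_eq, Fin.mk.injEq]; omega),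
        elemU_mem_up (by simp only [Fin.val_mk]; omega)⟩ : ↥(up n F 0)) := by
      apply Subtype.ext
      have : ((⁅g, h⁆ : ↥(up n F 0)) : GL (Fin n) F) =
          ⁅(g : GL (Fin n) F), (h : GL (Fin n) F)⁆ := rfl
      rw [this, hgdef, hhdef]
      exact elemU_commutator (i := ⟨0, by omega⟩) (j := ⟨k+1, by omega⟩) (k := ⟨k+2, by omega⟩)
        (by simp only [Fin.lt_def, Fin.val_mk]; omega) (by simp only [Fin.lt_def, Fin.val_mk]; omega)
    rwa [hval] at hcomm

lemma isNilpotent_up0 (hn : 0 < n) : Group.IsNilpotent ↥(up n F 0) := by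
  rw [nilpotent_iff_lowerCentralSeries]
  refine ⟨n - 1, le_bot_iff.mp ?_⟩
  calc Subgroup.lowerCentralSeries (⊤ : Subgroup ↥(up n F 0)) (n - 1) ≤ (up n F (n - 1)).subgroupOf (up n F 0) :=
        lcs_le_up _
    _ = ⊥ := by rw [up_bot hn, Subgroup.bot_subgroupOf]

lemma nilpotencyClass_up0 (hn : 2 ≤ n) :
    @Group.nilpotencyClass ↥(up n F 0) _ = n - 1 := by
  haveI := isNilpotent_up0 (F := F) (n := n) (by omega : 0 < n)
  have hle : Group.nilpotencyClass ↥(up n F 0) ≤ n - 1 := by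
    rw [← lowerCentralSeries_eq_bot_iff_nilpotencyClass_le]
    refine le_bot_iff.mp ?_
    calc Subgroup.lowerCentralSeries (⊤ : Subgroup ↥(up n F 0)) (n - 1) ≤ (up n F (n - 1)).subgroupOf (up n F 0) :=
          lcs_le_up _
      _ = ⊥ := by rw [up_bot (by omega), Subgroup.bot_subgroupOf]
  have hge : ¬ Group.nilpotencyClass ↥(up n F 0) ≤ n - 2 := by
    intro hcl
    have hbot := lowerCentralSeries_eq_bot_iff_nilpotencyClass_le.mpr hcl
    have hmem := chain_mem_lcs (n := n) (F := F) (n - 2) (by omega)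
    rw [hbot, Subgroup.mem_bot] at hmem
    have := congrArg (Subtype.val) hmem
    exact elemU_ne_one (by simp only [ne_eq, Fin.mk.injEq]; omega) this
  omega


/-- Cardinality of the unitriangular group. -/
lemma card_up0 : Nat.card ↥(up n F 0) = Fintype.card F ^ (∑ i ∈ Finset.range n, i) := by
  classical
  have key : ∀ f : {ij : Fin n × Fin n // ij.1 < ij.2} → F,
      ∃ g : ↥(up n F 0), ∀ e : {ij : Fin n × Fin n // ij.1 < ij.2},
        ((g : GL (Fin n) F) : Matrix (Fin n) (Fin n) F) e.1.1 e.1.2 = f e := by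
    intro f
    set N : Matrix (Fin n) (Fin n) F :=
      Matrix.of (fun i j => if h : i < j then f ⟨(i, j), h⟩ else 0) with hNdef
    have hN : sod 0 N := by
      intro i j hij
      have : ¬ i < j := by omega
      simp [hNdef, this]
    have htri : (1 + N).BlockTriangular id := by
      intro i j hij
      have h1 : (1 : Matrix (Fin n) (Fin n) F) i j = 0 :=
        Matrix.one_apply_ne (by exact fun h => absurd h (by rintro rfl; exact lt_irrefl _ hij))
      have h2 : N i j = 0 := hN i j (by simpa using hij.le)
      simp [Matrix.add_apply, h1, h2]
    have hdiag : ∀ i, (1 + N) i i = 1 := by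
      intro i
      have h2 : N i i = 0 := hN i i (by simp)
      simp [Matrix.add_apply, h2]
    have hdet : (1 + N).det = 1 := by
      rw [Matrix.det_of_upperTriangular htri]
      simp [hdiag]
    have hunit : IsUnit (1 + N).det := by rw [hdet]; exact isUnit_one
    set u : GL (Fin n) F := Matrix.nonsingInvUnit _ hunit with hudef
    have huval : (u : Matrix (Fin n) (Fin n) F) = 1 + N := rfl
    have humem : u ∈ up n F 0 := by
      rw [mem_up_iff, huval, add_sub_cancel_left]
      exact hN
    refine ⟨⟨u, humem⟩, fun e => ?_⟩
    rcases e with ⟨⟨i, j⟩, hij⟩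
    simp only [huval, Matrix.add_apply]
    rw [Matrix.one_apply_ne (ne_of_lt hij)]
    simp [hNdef, hij]
  have inj : ∀ g₁ g₂ : ↥(up n F 0),
      (∀ e : {ij : Fin n × Fin n // ij.1 < ij.2},
        ((g₁ : GL (Fin n) F) : Matrix (Fin n) (Fin n) F) e.1.1 e.1.2 =
        ((g₂ : GL (Fin n) F) : Matrix (Fin n) (Fin n) F) e.1.1 e.1.2) → g₁ = g₂ := by
    intro g₁ g₂ hfe
    have m₁ : sod 0 (((g₁ : GL (Fin n) F) : Matrix (Fin n) (Fin n) F) - 1) := g₁.2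
    have m₂ : sod 0 (((g₂ : GL (Fin n) F) : Matrix (Fin n) (Fin n) F) - 1) := g₂.2
    apply Subtype.ext
    apply Units.ext
    ext i j
    rcases lt_trichotomy i j with h | h | h
    · exact hfe ⟨(i, j), h⟩
    · subst h
      have e₁ := m₁ i i (by simp)
      have e₂ := m₂ i i (by simp)
      rw [Matrix.sub_apply, sub_eq_zero] at e₁ e₂
      rw [e₁, e₂]
    · have e₁ := m₁ i j (by simp; omega)
      have e₂ := m₂ i j (by simp; omega)
      rw [Matrix.sub_apply, sub_eq_zero] at e₁ e₂
      rw [e₁, e₂]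
  have hbij : Function.Bijective
      (fun (g : ↥(up n F 0)) (e : {ij : Fin n × Fin n // ij.1 < ij.2}) =>
        ((g : GL (Fin n) F) : Matrix (Fin n) (Fin n) F) e.1.1 e.1.2) := by
    constructor
    · intro g₁ g₂ h
      exact inj g₁ g₂ fun e => congrFun h e
    · intro f
      obtain ⟨g, hg⟩ := key f
      exact ⟨g, funext hg⟩
  have hcard := Nat.card_eq_of_bijective _ hbij
  rw [hcard, Nat.card_fun]
  congr 1
  · exact Nat.card_eq_fintype_card
  · -- count the strictly upper positions
    have esig : {ij : Fin n × Fin n // ij.1 < ij.2} ≃ Σ j : Fin n, Fin (j : ℕ) :=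
      { toFun := fun x => ⟨x.1.2, ⟨(x.1.1 : ℕ), x.2⟩⟩
        invFun := fun s => ⟨(⟨(s.2 : ℕ), lt_trans s.2.isLt s.1.isLt⟩, s.1), s.2.isLt⟩
        left_inv := fun x => by
          rcases x with ⟨⟨i, j⟩, h⟩
          simp
        right_inv := fun s => by
          rcases s with ⟨j, i⟩
          simp }
    rw [Nat.card_congr esig, Nat.card_eq_fintype_card, Fintype.card_sigma]
    simp only [Fintype.card_fin]
    exact Fin.sum_univ_eq_sum_range (fun i => i) n


/-- `p`-adic valuation of the order of `GL_n(q)`, `q = p ^ f`. -/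
lemma factorization_card_GL {p f : ℕ} (hp : p.Prime) (hf : 0 < f)
    (hF : Fintype.card F = p ^ f) :
    (Nat.card (GL (Fin n) F)).factorization p = f * ∑ i ∈ Finset.range n, i := by
  classical
  set q := Fintype.card F with hq
  have hq1 : 1 < q := by
    rw [hF]
    exact Nat.one_lt_pow (by omega) hp.one_lt
  have hcard : Nat.card (GL (Fin n) F) = ∏ i : Fin n, (q ^ n - q ^ (i : ℕ)) :=
    Matrix.card_GL_field n
  have hfac : ∀ i : Fin n, q ^ n - q ^ (i : ℕ) = q ^ (i : ℕ) * (q ^ (n - (i : ℕ)) - 1) := by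
    intro i
    have hin : (i : ℕ) ≤ n := i.isLt.le
    have : q ^ (i : ℕ) * (q ^ (n - (i : ℕ)) - 1) =
        q ^ (i : ℕ) * q ^ (n - (i : ℕ)) - q ^ (i : ℕ) * 1 := Nat.mul_sub _ _ _
    rw [this, ← pow_add, mul_one, Nat.add_sub_cancel' hin]
  have hprod : Nat.card (GL (Fin n) F) =
      q ^ (∑ i ∈ Finset.range n, i) * ∏ i : Fin n, (q ^ (n - (i : ℕ)) - 1) := by
    rw [hcard, Finset.prod_congr rfl (fun i _ => hfac i), Finset.prod_mul_distrib,
      Finset.prod_pow_eq_pow_sum]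
    congr 1
    rw [Fin.sum_univ_eq_sum_range (fun i => i) n]
  set m := ∏ i : Fin n, (q ^ (n - (i : ℕ)) - 1) with hm
  have hndvd : ¬ p ∣ m := by
    intro hdvd
    rw [hm, Prime.dvd_finset_prod_iff hp.prime] at hdvd
    obtain ⟨i, _, hi⟩ := hdvd
    have h1 : 1 ≤ n - (i : ℕ) := by have := i.isLt; omega
    have hpq : p ∣ q ^ (n - (i : ℕ)) := by
      rw [hF, ← pow_mul]
      exact dvd_pow_self p (by positivity)
    have : p ∣ 1 := by
      have := Nat.dvd_sub hpq hi
      rwa [Nat.sub_sub_self (Nat.one_le_pow _ _ (by omega))] at this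
    exact hp.one_lt.ne' (Nat.dvd_one.mp this)
  have hm0 : m ≠ 0 := fun h0 => hndvd (h0 ▸ dvd_zero p)
  have hq0 : q ^ (∑ i ∈ Finset.range n, i) ≠ 0 := by positivity
  rw [hprod, Nat.factorization_mul hq0 hm0]
  simp only [Finsupp.coe_add, Pi.add_apply]
  rw [Nat.factorization_eq_zero_of_not_dvd hndvd, add_zero, hF, ← pow_mul,
    hp.factorization_pow]
  simp [mul_comm]

end SylowGLAux

lemma nilpotencyClass_eq_of_mulEquiv {G H : Type*} [Group G] [Group H] (e : G ≃* H)
    [hG : Group.IsNilpotent G] [hH : Group.IsNilpotent H] :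
    Group.nilpotencyClass G = Group.nilpotencyClass H :=
  le_antisymm (nilpotencyClass_le_of_surjective e.symm.toMonoidHom e.symm.surjective)
    (nilpotencyClass_le_of_surjective e.toMonoidHom e.surjective)

open SylowGLAux in
/-- The Sylow `p`-subgroups of `GL_n(q)`, where `q = p ^ f` is a power of the prime `p`,
have nilpotency class exactly `n - 1` (for `n ≥ 2`). -/
theorem nilpotencyClass_sylow_GL (p f n : ℕ) (hp : p.Prime) (hf : 0 < f) (hn : 2 ≤ n)
    (F : Type*) [Field F] [Fintype F] (hF : Fintype.card F = p ^ f)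
    (P : Sylow p (GL (Fin n) F))
    [Group.IsNilpotent ↥(P : Subgroup (GL (Fin n) F))] :
    Group.nilpotencyClass ↥(P : Subgroup (GL (Fin n) F)) = n - 1 := by
  haveI : Fact p.Prime := ⟨hp⟩
  haveI : Finite (GL (Fin n) F) := inferInstance
  have hcard : Nat.card ↥(up n F 0) =
      p ^ ((Nat.card (GL (Fin n) F)).factorization p) := by
    rw [card_up0, factorization_card_GL hp hf hF, hF, ← pow_mul]
  let S : Sylow p (GL (Fin n) F) := Sylow.ofCard (up n F 0) hcard
  haveI hNup : Group.IsNilpotent ↥(up n F 0) := isNilpotent_up0 (F := F) (by omega)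
  haveI hNS : Group.IsNilpotent ↥(S : Subgroup (GL (Fin n) F)) := hNup
  have e := Sylow.equiv P S
  have h1 : Group.nilpotencyClass ↥(P : Subgroup (GL (Fin n) F)) =
      Group.nilpotencyClass ↥(S : Subgroup (GL (Fin n) F)) :=
    nilpotencyClass_eq_of_mulEquiv e
  have h2 : Group.nilpotencyClass ↥(S : Subgroup (GL (Fin n) F)) =
      Group.nilpotencyClass ↥(up n F 0) := rfl
  rw [h1, h2, nilpotencyClass_up0 hn]
end
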